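/- If P_c(X) < P_c(X|Y), then there exist ε_L ∈ (P_c(X), P_c(X|Y)) and a constant d ≥ 0 such that h̲(ε) = 1 − (P_c(X|Y) − ε)·d for every ε ∈ [ε_L, P_c(X|Y)]; in particular, h̲ is affine on [ε_L, P_c(X|Y)] and d is the left derivative of h̲ at P_c(X|Y). -/

import Mathlib

open Finset

/-- Privacy `𝒫(F) = P_c(X|Z)` of a square `(N+1)×(N+1)` filter, for a joint pmf `P` of
`(X,Y)` on `Fin (M+1) × Fin (N+1)`. -/
noncomputable def privS {M N : ℕ} (P : Fin (M + 1) → Fin (N + 1) → ℝ)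
    (F : Fin (N + 1) → Fin (N + 1) → ℝ) : ℝ :=
  ∑ z, ⨆ x, ∑ y, P x y * F y z

/-- Utility `𝒰(F) = P_c(Y|Z)` of a square filter. -/
noncomputable def utilS {M N : ℕ} (P : Fin (M + 1) → Fin (N + 1) → ℝ)
    (F : Fin (N + 1) → Fin (N + 1) → ℝ) : ℝ :=
  ∑ z, ⨆ y, (∑ x, P x y) * F y z

/-- `F` is a row-stochastic `(N+1)×(N+1)` matrix. -/
def IsFilterS {N : ℕ} (F : Fin (N + 1) → Fin (N + 1) → ℝ) : Prop :=
  (∀ y z, 0 ≤ F y z) ∧ ∀ y, ∑ z, F y z = 1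

/-- The variant privacy-constrained guessing function `h̲(ε)`, where the displayed
alphabet equals the alphabet of `Y`. -/
noncomputable def hUnder {M N : ℕ} (P : Fin (M + 1) → Fin (N + 1) → ℝ) (ε : ℝ) : ℝ :=
  sSup {u | ∃ F, IsFilterS F ∧ privS P F ≤ ε ∧ u = utilS P F}

/-- `P_c(X)`. -/
noncomputable def PcX {M N : ℕ} (P : Fin (M + 1) → Fin (N + 1) → ℝ) : ℝ :=
  ⨆ x, ∑ y, P x y

/-- `P_c(X|Y)`. -/
noncomputable def PcXY {M N : ℕ} (P : Fin (M + 1) → Fin (N + 1) → ℝ) : ℝ :=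
  ∑ y, ⨆ x, P x y

set_option linter.unusedSectionVars false
set_option linter.unusedVariables false
set_option maxHeartbeats 1000000

open Set

-- helpers from a.lean (assumed): le_fin_ciSup, fin_ciSup_exists, sum_ciSup_eq
variable {ι κ : Type*} [Fintype ι] [Nonempty ι] [Fintype κ]
lemma le_fin_ciSup (f : ι → ℝ) (i : ι) : f i ≤ ⨆ j, f j :=
  le_ciSup (Set.finite_range f).bddAbove i
lemma fin_ciSup_exists (f : ι → ℝ) : ∃ i, (⨆ j, f j) = f i := by
  obtain ⟨i, hi⟩ := Finite.exists_max f
  exact ⟨i, le_antisymm (ciSup_le hi) (le_fin_ciSup f i)⟩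
lemma sum_ciSup_eq (g : ι → κ → ℝ) :
    ∑ z : κ, ⨆ x : ι, g x z = ⨆ τ : κ → ι, ∑ z : κ, g (τ z) z := by
  classical
  have hτ : ∀ z : κ, ∃ i, (⨆ j, g j z) = g i z := fun z => fin_ciSup_exists (g · z)
  choose τ0 hτ0 using hτ
  apply le_antisymm
  · calc ∑ z : κ, ⨆ x : ι, g x z = ∑ z : κ, g (τ0 z) z :=
          Finset.sum_congr rfl fun z _ => hτ0 z
      _ ≤ ⨆ τ : κ → ι, ∑ z : κ, g (τ z) z :=
          le_fin_ciSup (fun τ : κ → ι => ∑ z : κ, g (τ z) z) τ0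
  · refine ciSup_le fun τ => Finset.sum_le_sum fun z _ => le_fin_ciSup (g · z) (τ z)




section extreme

variable {E : Type*} [AddCommGroup E] [Module ℝ E]

lemma finite_extremePoints {ι : Type*} [Finite ι]
    (φ : ι → E → ℝ) (hlin : ∀ i, IsLinearMap ℝ (φ i)) (β : ι → ℝ) :
    (({x : E | ∀ i, φ i x ≤ β i}).extremePoints ℝ).Finite := by
  classical
  set Q : Set E := {x : E | ∀ i, φ i x ≤ β i} with hQ
  cases nonempty_fintype ι
  -- key: at an extreme point, tight constraints pin down directions
  have key : ∀ x ∈ Q.extremePoints ℝ, ∀ v : E, (∀ i, φ i x = β i → φ i v = 0) → v = 0 := by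
    intro x hx v hv
    by_contra hv0
    obtain ⟨hxQ, hext⟩ := mem_extremePoints.1 hx
    -- choose δ
    set s : Finset ι := Finset.univ.filter (fun i => φ i v ≠ 0) with hs
    have hδ : ∃ δ : ℝ, 0 < δ ∧ ∀ i ∈ s, δ * |φ i v| ≤ β i - φ i x := by
      by_cases hne : s.Nonempty
      · set g : ι → ℝ := fun i => (β i - φ i x) / |φ i v| with hg
        refine ⟨min 1 (s.inf' hne g), lt_min one_pos ?_, fun i hi => ?_⟩
        · rw [Finset.lt_inf'_iff]
          intro i hi
          have hiv : φ i v ≠ 0 := (Finset.mem_filter.1 hi).2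
          have h1 : φ i x < β i := lt_of_le_of_ne (hxQ i) (fun h => hiv (hv i h))
          exact div_pos (by linarith) (abs_pos.2 hiv)
        · have hiv : φ i v ≠ 0 := (Finset.mem_filter.1 hi).2
          have h2 : min 1 (s.inf' hne g) ≤ g i := le_trans (min_le_right _ _) (Finset.inf'_le g hi)
          have h3 : (0:ℝ) < |φ i v| := abs_pos.2 hiv
          calc min 1 (s.inf' hne g) * |φ i v| ≤ g i * |φ i v| := by
                exact mul_le_mul_of_nonneg_right h2 h3.le
            _ = β i - φ i x := by exact div_mul_cancel₀ _ h3.ne'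
      · exact ⟨1, one_pos, fun i hi => absurd ⟨i, hi⟩ hne⟩
    obtain ⟨δ, hδ0, hδle⟩ := hδ
    have hmem : ∀ (t : ℝ), |t| ≤ δ → x + t • v ∈ Q := by
      intro t ht i
      have : φ i (x + t • v) = φ i x + t * φ i v := by
        rw [(hlin i).map_add, (hlin i).map_smul, smul_eq_mul]
      rw [this]
      by_cases hiv : φ i v = 0
      · simpa [hiv] using hxQ i
      · have hi : i ∈ s := Finset.mem_filter.2 ⟨Finset.mem_univ i, hiv⟩
        have : t * φ i v ≤ |t| * |φ i v| := le_trans (le_abs_self _) (by rw [abs_mul])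
        have h4 : |t| * |φ i v| ≤ δ * |φ i v| :=
          mul_le_mul_of_nonneg_right ht (abs_nonneg _)
        have := hδle i hi
        linarith
    have h1 : x + δ • v ∈ Q := hmem δ (by rw [abs_of_pos hδ0])
    have h2 : x - δ • v ∈ Q := by
      have := hmem (-δ) (by rw [abs_neg, abs_of_pos hδ0])
      simpa [sub_eq_add_neg, neg_smul] using this
    have hseg : x ∈ openSegment ℝ (x + δ • v) (x - δ • v) := by
      refine ⟨1/2, 1/2, by norm_num, by norm_num, by norm_num, ?_⟩
      module
    have := (hext _ h1 _ h2 hseg).1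
    have : δ • v = 0 := by
      have h5 : x + δ • v = x + 0 := by rw [add_zero]; exact this
      exact add_left_cancel h5
    exact hv0 (by simpa [hδ0.ne'] using (smul_eq_zero.1 this))
  -- injectivity of the tight-set map
  have hinj : Set.InjOn (fun x => {i | φ i x = β i}) (Q.extremePoints ℝ) := by
    intro x hx y hy hxy
    have hvx : ∀ i, φ i x = β i → φ i (y - x) = 0 := by
      intro i hi
      have hxy' : {i | φ i x = β i} = {i | φ i y = β i} := hxy
      have hiy : φ i y = β i := (Set.ext_iff.1 hxy' i).1 hi
      rw [(hlin i).map_sub, hiy, hi, sub_self]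
    have := key x hx (y - x) hvx
    exact (sub_eq_zero.1 this).symm
  exact Set.Finite.of_finite_image (Set.toFinite _) hinj

end extreme


section twodim

lemma hull_coords {W : Finset (ℝ × ℝ)} {p : ℝ × ℝ} (hp : p ∈ convexHull ℝ (W : Set (ℝ × ℝ))) :
    ∃ μ : (ℝ × ℝ) → ℝ, (∀ w ∈ W, 0 ≤ μ w) ∧ ∑ w ∈ W, μ w = 1 ∧
      ∑ w ∈ W, μ w * w.1 = p.1 ∧ ∑ w ∈ W, μ w * w.2 = p.2 := by
  obtain ⟨μ, h0, h1, h2⟩ := Finset.mem_convexHull'.1 hp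
  refine ⟨μ, h0, h1, ?_, ?_⟩
  · have := congrArg Prod.fst h2
    simpa [Prod.fst_sum, Prod.smul_fst, smul_eq_mul] using this
  · have := congrArg Prod.snd h2
    simpa [Prod.snd_sum, Prod.smul_snd, smul_eq_mul] using this

lemma affine_tail (W : Finset (ℝ × ℝ)) {a b : ℝ} (hab : a < b)
    (hW1 : ∀ w ∈ W, w.1 ∈ Set.Icc a b)
    (v : ℝ → ℝ)
    (hv_mem : ∀ ε ∈ Set.Icc a b, (ε, v ε) ∈ convexHull ℝ (W : Set (ℝ × ℝ)))
    (hv_max : ∀ p ∈ convexHull ℝ (W : Set (ℝ × ℝ)), p.2 ≤ v p.1) :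
    ∃ ε0 ∈ Set.Ico a b, ∃ d : ℝ, ∀ ε ∈ Set.Icc ε0 b, v ε = v b - (b - ε) * d := by
  classical
  set C := convexHull ℝ (W : Set (ℝ × ℝ)) with hC
  -- the filter of points strictly left of b is nonempty
  set Wlt : Finset (ℝ × ℝ) := W.filter (fun w => w.1 < b) with hWlt
  have hane : Wlt.Nonempty := by
    by_contra hne
    obtain ⟨μ, hμ0, hμ1, hμx, -⟩ := hull_coords (hv_mem a ⟨le_refl a, hab.le⟩)
    have hall : ∀ w ∈ W, w.1 = b := by
      intro w hw
      rcases lt_or_eq_of_le (hW1 w hw).2 with h | h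
      · exact absurd ⟨w, Finset.mem_filter.2 ⟨hw, h⟩⟩ hne
      · exact h
    have : (a : ℝ) = b := by
      have hμx' : ∑ w ∈ W, μ w * w.1 = a := hμx
      rw [← hμx']
      calc ∑ w ∈ W, μ w * w.1 = ∑ w ∈ W, μ w * b :=
            Finset.sum_congr rfl fun w hw => by rw [hall w hw]
        _ = b := by rw [← Finset.sum_mul, hμ1, one_mul]
    exact absurd this hab.ne
  set ε0 : ℝ := Wlt.sup' hane Prod.fst with hε0
  have hε0b : ε0 < b := by
    rw [hε0, Finset.sup'_lt_iff]
    intro w hw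
    exact (Finset.mem_filter.1 hw).2
  have hε0a : a ≤ ε0 := by
    obtain ⟨w, hw⟩ := hane
    exact le_trans (hW1 w (Finset.mem_filter.1 hw).1).1 (Finset.le_sup' Prod.fst hw)
  set d : ℝ := (v b - v ε0) / (b - ε0) with hd
  set L : ℝ → ℝ := fun e => v b - (b - e) * d with hL
  have hbε0 : (0:ℝ) < b - ε0 := by linarith
  have hLε0 : L ε0 = v ε0 := by
    rw [hL]; simp only [hd]
    field_simp
    ring
  have hLb : L b = v b := by simp [hL]
  -- concavity-type inequality
  have cl : ∀ e1 ∈ Set.Icc a b, ∀ e2 ∈ Set.Icc a b, ∀ θ : ℝ, 0 ≤ θ → θ ≤ 1 →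
      θ * v e1 + (1 - θ) * v e2 ≤ v (θ * e1 + (1 - θ) * e2) := by
    intro e1 he1 e2 he2 θ hθ0 hθ1
    have hp1 : (e1, v e1) ∈ C := hv_mem e1 he1
    have hp2 : (e2, v e2) ∈ C := hv_mem e2 he2
    have hmix : θ • (e1, v e1) + (1 - θ) • (e2, v e2) ∈ C :=
      (convex_convexHull ℝ _) hp1 hp2 hθ0 (by linarith) (by ring)
    have := hv_max _ hmix
    simpa [Prod.smul_fst, Prod.smul_snd, smul_eq_mul] using this
  -- step: v e ≤ L e for e ∈ [a, ε0]
  have stepα : ∀ e, a ≤ e → e ≤ ε0 → v e ≤ L e := by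
    intro e hae heε0
    rcases eq_or_lt_of_le heε0 with h | h
    · rw [h, hLε0]
    · have heb : e < b := lt_trans h hε0b
      set θ : ℝ := (b - ε0) / (b - e) with hθ
      have hbe : (0:ℝ) < b - e := by linarith
      have hθ0 : 0 < θ := div_pos hbε0 hbe
      have hθ1 : θ ≤ 1 := (div_le_one hbe).2 (by linarith)
      have hmixeq : θ * e + (1 - θ) * b = ε0 := by
        rw [hθ]; field_simp; ring
      have := cl e ⟨hae, heb.le⟩ b ⟨hab.le, le_refl b⟩ θ hθ0.le hθ1
      rw [hmixeq] at this
      -- this : θ * v e + (1 - θ) * v b ≤ v ε0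
      have hD : d * (b - ε0) = v b - v ε0 := by rw [hd]; field_simp
      have h6 : θ * (b - e) = b - ε0 := by rw [hθ]; field_simp
      have h7 : (1 - θ) * (b - e) = ε0 - e := by
        have : (1 - θ) * (b - e) = (b - e) - θ * (b - e) := by ring
        rw [this, h6]; ring
      have hmul := mul_le_mul_of_nonneg_right this hbe.le
      have hmul' : (b - ε0) * v e + (ε0 - e) * v b ≤ v ε0 * (b - e) := by
        have hexp : (θ * v e + (1 - θ) * v b) * (b - e)
            = v e * (θ * (b - e)) + v b * ((1 - θ) * (b - e)) := by ring
        rw [hexp, h6, h7] at hmul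
        linarith
      have goal2 : (b - ε0) * v e ≤ (b - ε0) * (v b - (b - e) * d) := by
        have hexp2 : (b - ε0) * (v b - (b - e) * d)
            = (b - ε0) * v b - (b - e) * (d * (b - ε0)) := by ring
        rw [hexp2, hD]
        linarith
      have := (mul_le_mul_iff_right₀ hbε0).1 goal2
      simpa [hL] using this
  -- every point of W lies below L
  have stepβ : ∀ w ∈ W, w.2 ≤ L w.1 := by
    intro w hw
    have h1 : w.2 ≤ v w.1 := hv_max w (subset_convexHull ℝ _ hw)
    rcases lt_or_eq_of_le (hW1 w hw).2 with h | h
    · have : w.1 ≤ ε0 := Finset.le_sup' Prod.fst (Finset.mem_filter.2 ⟨hw, h⟩)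
      exact le_trans h1 (stepα w.1 (hW1 w hw).1 this)
    · rw [h, hLb]; rw [h] at h1; exact h1
  -- every point of the hull lies below L
  have stepγ : ∀ p ∈ C, p.2 ≤ L p.1 := by
    intro p hp
    obtain ⟨μ, hμ0, hμ1, hμx, hμy⟩ := hull_coords hp
    have h1 : p.2 ≤ ∑ w ∈ W, μ w * L w.1 := by
      rw [← hμy]
      exact Finset.sum_le_sum fun w hw => mul_le_mul_of_nonneg_left (stepβ w hw) (hμ0 w hw)
    have h2 : ∑ w ∈ W, μ w * L w.1 = L p.1 := by
      rw [hL]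
      simp only []
      calc ∑ w ∈ W, μ w * (v b - (b - w.1) * d)
          = ∑ w ∈ W, (μ w * (v b - b * d) + (μ w * w.1) * d) := by
            refine Finset.sum_congr rfl fun w hw => by ring
        _ = (∑ w ∈ W, μ w) * (v b - b * d) + (∑ w ∈ W, μ w * w.1) * d := by
            rw [Finset.sum_add_distrib, Finset.sum_mul, Finset.sum_mul]
        _ = v b - (b - p.1) * d := by rw [hμ1, hμx]; ring
    linarith
  refine ⟨ε0, ⟨hε0a, hε0b⟩, d, fun ε hε => ?_⟩
  have hεab : ε ∈ Set.Icc a b := ⟨le_trans hε0a hε.1, hε.2⟩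
  have hub : v ε ≤ L ε := stepγ (ε, v ε) (hv_mem ε hεab)
  have hlb : L ε ≤ v ε := by
    set θ : ℝ := (b - ε) / (b - ε0) with hθ
    have hθ0 : 0 ≤ θ := div_nonneg (by linarith [hε.2]) hbε0.le
    have hθ1 : θ ≤ 1 := (div_le_one hbε0).2 (by linarith [hε.1])
    have hmixeq : θ * ε0 + (1 - θ) * b = ε := by
      rw [hθ]; field_simp; ring
    have := cl ε0 ⟨hε0a, hε0b.le⟩ b ⟨hab.le, le_refl b⟩ θ hθ0 hθ1
    rw [hmixeq] at this
    have hLεval : L ε = θ * v ε0 + (1 - θ) * v b := by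
      rw [hL]; simp only [hθ, hd]
      field_simp
      ring
    rw [hLεval]
    exact this
  exact le_antisymm hub hlb

end twodim

namespace HUAux

variable {M N : ℕ} (P : Fin (M + 1) → Fin (N + 1) → ℝ)

noncomputable def Qmg (y : Fin (N + 1)) : ℝ := ∑ x, P x y

noncomputable def ellg (τ : Fin (N + 1) → Fin (M + 1)) (F : Fin (N + 1) → Fin (N + 1) → ℝ) : ℝ :=
  ∑ z, ∑ y, P (τ z) y * F y z

noncomputable def Lg (σ : Fin (N + 1) → Fin (N + 1)) (F : Fin (N + 1) → Fin (N + 1) → ℝ) : ℝ :=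
  ∑ z, Qmg P (σ z) * F (σ z) z

lemma privS_eq (F : Fin (N + 1) → Fin (N + 1) → ℝ) :
    privS P F = ⨆ τ : Fin (N + 1) → Fin (M + 1), ellg P τ F :=
  sum_ciSup_eq (fun x z => ∑ y, P x y * F y z)

lemma utilS_eq (F : Fin (N + 1) → Fin (N + 1) → ℝ) :
    utilS P F = ⨆ σ : Fin (N + 1) → Fin (N + 1), Lg P σ F :=
  sum_ciSup_eq (fun y z => Qmg P y * F y z)

lemma privS_le_iff (F : Fin (N + 1) → Fin (N + 1) → ℝ) (ε : ℝ) :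
    privS P F ≤ ε ↔ ∀ τ, ellg P τ F ≤ ε := by
  rw [privS_eq]
  constructor
  · intro h τ; exact le_trans (le_fin_ciSup (fun τ => ellg P τ F) τ) h
  · exact ciSup_le

lemma Qmg_nonneg (hpos : ∀ x y, 0 ≤ P x y) (y : Fin (N + 1)) : 0 ≤ Qmg P y :=
  Finset.sum_nonneg fun x _ => hpos x y

lemma Lg_le_utilS {F : Fin (N + 1) → Fin (N + 1) → ℝ} (σ : Fin (N + 1) → Fin (N + 1)) :
    Lg P σ F ≤ utilS P F := by
  rw [utilS_eq]
  exact le_fin_ciSup (fun σ => Lg P σ F) σ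

lemma sum_Qmg (hsum : ∑ x, ∑ y, P x y = 1) : ∑ y, Qmg P y = 1 := by
  rw [← hsum, Finset.sum_comm]
  rfl

lemma utilS_le_one (hpos : ∀ x y, 0 ≤ P x y) (hsum : ∑ x, ∑ y, P x y = 1) {F : Fin (N + 1) → Fin (N + 1) → ℝ} (hF : IsFilterS F) :
    utilS P F ≤ 1 := by
  have h1 : utilS P F ≤ ∑ z, ∑ y, Qmg P y * F y z := by
    refine Finset.sum_le_sum fun z _ => ?_
    refine ciSup_le fun y => ?_
    exact Finset.single_le_sum
      (fun y' _ => mul_nonneg (Qmg_nonneg P hpos y') (hF.1 y' z)) (Finset.mem_univ y)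
  calc utilS P F ≤ ∑ z, ∑ y, Qmg P y * F y z := h1
    _ = ∑ y, Qmg P y * ∑ z, F y z := by rw [Finset.sum_comm]; simp [Finset.mul_sum]
    _ = 1 := by
        rw [← sum_Qmg P hsum]
        exact Finset.sum_congr rfl fun y _ => by rw [hF.2 y, mul_one]

section QsetSec

variable {M N : ℕ} (P : Fin (M + 1) → Fin (N + 1) → ℝ)

/-- The feasible polytope, with the privacy level as last coordinate. -/
def Qset : Set ((Fin (N + 1) → Fin (N + 1) → ℝ) × ℝ) :=
  {p | (∀ y z, 0 ≤ p.1 y z) ∧ (∀ y, ∑ z, p.1 y z = 1) ∧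
    (∀ τ, ellg P τ p.1 ≤ p.2) ∧ p.2 ∈ Set.Icc (PcX P) (PcXY P)}

/-- index type for the linear constraints -/
abbrev CIdx (M N : ℕ) : Type :=
  (Fin (N + 1) × Fin (N + 1)) ⊕ ((Fin (N + 1) ⊕ Fin (N + 1)) ⊕
    ((Fin (N + 1) → Fin (M + 1)) ⊕ Bool))

abbrev ESp (N : ℕ) : Type := (Fin (N + 1) → Fin (N + 1) → ℝ) × ℝ

noncomputable def entryL (y z : Fin (N + 1)) : ESp N →ₗ[ℝ] ℝ :=
  (LinearMap.proj z) ∘ₗ (LinearMap.proj y) ∘ₗ (LinearMap.fst ℝ _ ℝ)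

noncomputable def sndL : ESp N →ₗ[ℝ] ℝ := LinearMap.snd ℝ _ ℝ

@[simp] lemma entryL_apply (y z : Fin (N + 1)) (p : ESp N) : entryL y z p = p.1 y z := rfl
@[simp] lemma sndL_apply (p : ESp N) : sndL p = p.2 := rfl

noncomputable def cmapL : CIdx M N → (ESp N →ₗ[ℝ] ℝ)
  | Sum.inl (y, z) => -(entryL y z)
  | Sum.inr (Sum.inl (Sum.inl y)) => ∑ z, entryL y z
  | Sum.inr (Sum.inl (Sum.inr y)) => -(∑ z, entryL y z)
  | Sum.inr (Sum.inr (Sum.inl τ)) => (∑ z, ∑ y, P (τ z) y • entryL y z) - sndL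
  | Sum.inr (Sum.inr (Sum.inr true)) => sndL
  | Sum.inr (Sum.inr (Sum.inr false)) => -sndL

noncomputable def cbd : CIdx M N → ℝ
  | Sum.inl _ => 0
  | Sum.inr (Sum.inl (Sum.inl _)) => 1
  | Sum.inr (Sum.inl (Sum.inr _)) => -1
  | Sum.inr (Sum.inr (Sum.inl _)) => 0
  | Sum.inr (Sum.inr (Sum.inr true)) => PcXY P
  | Sum.inr (Sum.inr (Sum.inr false)) => -(PcX P)

lemma cmapL_tau_apply (τ : Fin (N + 1) → Fin (M + 1)) (p : ESp N) :
    cmapL P (Sum.inr (Sum.inr (Sum.inl τ))) p = ellg P τ p.1 - p.2 := by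
  simp [cmapL, ellg, LinearMap.sum_apply, LinearMap.smul_apply, smul_eq_mul]

lemma cmapL_rowsum_apply (y : Fin (N + 1)) (p : ESp N) :
    cmapL P (Sum.inr (Sum.inl (Sum.inl y))) p = ∑ z, p.1 y z := by
  simp [cmapL, LinearMap.sum_apply]

lemma Qset_eq_constraints :
    Qset P = {p | ∀ i : CIdx M N, cmapL P i p ≤ cbd P i} := by
  ext p
  constructor
  · rintro ⟨h1, h2, h3, h4⟩ i
    rcases i with ⟨y, z⟩ | ⟨y | y⟩ | ⟨τ | b⟩
    · simpa [cmapL, cbd] using h1 y z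
    · rw [cmapL_rowsum_apply, h2 y]; simp [cbd]
    · have : cmapL P (Sum.inr (Sum.inl (Sum.inr y))) p
          = -(∑ z, p.1 y z) := by simp [cmapL, LinearMap.sum_apply]
      rw [this, h2 y]; simp [cbd]
    · rw [cmapL_tau_apply]
      have := h3 τ
      simp only [cbd]
      linarith
    · cases b
      · simpa [cmapL, cbd] using h4.1
      · simpa [cmapL, cbd] using h4.2
  · intro h
    have h2 : ∀ y, ∑ z, p.1 y z = 1 := by
      intro y
      have ha := h (Sum.inr (Sum.inl (Sum.inl y)))
      have hb := h (Sum.inr (Sum.inl (Sum.inr y)))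
      rw [cmapL_rowsum_apply] at ha
      simp only [cmapL, cbd, LinearMap.neg_apply, LinearMap.sum_apply, entryL_apply] at ha hb
      linarith
    refine ⟨fun y z => ?_, h2, fun τ => ?_, ?_, ?_⟩
    · simpa [cmapL, cbd] using h (Sum.inl (y, z))
    · have := h (Sum.inr (Sum.inr (Sum.inl τ)))
      rw [cmapL_tau_apply] at this
      simp only [cbd] at this
      linarith
    · have := h (Sum.inr (Sum.inr (Sum.inr false)))
      simp only [cmapL, cbd, LinearMap.neg_apply, sndL_apply] at this
      linarith
    · have := h (Sum.inr (Sum.inr (Sum.inr true)))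
      simpa [cmapL, cbd] using this

lemma Qset_convex : Convex ℝ (Qset P) := by
  rw [Qset_eq_constraints, Set.setOf_forall]
  exact convex_iInter fun i => convex_halfSpace_le ((cmapL P i).isLinear) (cbd P i)

lemma Qset_closed : IsClosed (Qset P) := by
  rw [Qset_eq_constraints, Set.setOf_forall]
  exact isClosed_iInter fun i =>
    isClosed_le ((cmapL P i).continuous_of_finiteDimensional) continuous_const

lemma Qset_compact : IsCompact (Qset P) := by
  have hK : IsCompact ((Set.pi Set.univ fun _ : Fin (N + 1) =>
      Set.pi Set.univ fun _ : Fin (N + 1) => Set.Icc (0:ℝ) 1) ×ˢ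
      Set.Icc (PcX P) (PcXY P)) :=
    (isCompact_univ_pi fun _ => isCompact_univ_pi fun _ => isCompact_Icc).prod isCompact_Icc
  refine hK.of_isClosed_subset (Qset_closed P) ?_
  rintro p ⟨h1, h2, h3, h4⟩
  refine ⟨?_, h4⟩
  intro y _
  intro z _
  refine ⟨h1 y z, ?_⟩
  calc p.1 y z ≤ ∑ z', p.1 y z' :=
        Finset.single_le_sum (fun z' _ => h1 y z') (Finset.mem_univ z)
    _ = 1 := h2 y

lemma Qset_hull : ∃ V : Set (ESp N), V.Finite ∧ Qset P = convexHull ℝ V := by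
  refine ⟨(Qset P).extremePoints ℝ, ?_, ?_⟩
  · have := finite_extremePoints (fun i => (cmapL P i : ESp N → ℝ))
      (fun i => (cmapL P i).isLinear) (cbd P)
    rw [Qset_eq_constraints]
    exact this
  · have h := closure_convexHull_extremePoints (Qset_compact P) (Qset_convex P)
    have hfin : ((Qset P).extremePoints ℝ).Finite := by
      have := finite_extremePoints (fun i => (cmapL P i : ESp N → ℝ))
        (fun i => (cmapL P i).isLinear) (cbd P)
      rw [Qset_eq_constraints]
      exact this
    have hcl : IsClosed (convexHull ℝ ((Qset P).extremePoints ℝ)) :=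
      (hfin.isCompact_convexHull ℝ).isClosed
    rw [hcl.closure_eq] at h
    exact h.symm

/-- value of the σ-selection LP at privacy level ε -/
noncomputable def vsl (σ : Fin (N + 1) → Fin (N + 1)) (ε : ℝ) : ℝ :=
  sSup {t | ∃ F, (F, ε) ∈ Qset P ∧ t = Lg P σ F}

/-- the constant filter -/
noncomputable def F0 : Fin (N + 1) → Fin (N + 1) → ℝ := fun _ z => if z = 0 then 1 else 0

lemma F0_mem {ε : ℝ} (hε : ε ∈ Set.Icc (PcX P) (PcXY P)) : (F0 (N := N), ε) ∈ Qset P := by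
  refine ⟨fun y z => by dsimp [F0]; positivity, fun y => by simp [F0], fun τ => ?_, hε⟩
  have h1 : ellg P τ (F0 (N := N)) = ∑ y, P (τ 0) y := by
    unfold ellg
    rw [show (∑ z, ∑ y, P (τ z) y * F0 (N := N) y z)
        = ∑ z, (if z = 0 then ∑ y, P (τ z) y else 0) from
      Finset.sum_congr rfl fun z _ => by by_cases h : z = 0 <;> simp [F0, h]]
    simp
  rw [h1]
  exact le_trans (le_fin_ciSup (fun x => ∑ y, P x y) (τ 0)) hε.1

lemma vsl_nonempty {ε : ℝ} (hε : ε ∈ Set.Icc (PcX P) (PcXY P)) (σ : Fin (N + 1) → Fin (N + 1)) :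
    {t | ∃ F, (F, ε) ∈ Qset P ∧ t = Lg P σ F}.Nonempty :=
  ⟨Lg P σ (F0 (N := N)), F0 (N := N), F0_mem P hε, rfl⟩

lemma vsl_bdd (hpos : ∀ x y, 0 ≤ P x y) (hsum : ∑ x, ∑ y, P x y = 1)
    (ε : ℝ) (σ : Fin (N + 1) → Fin (N + 1)) :
    BddAbove {t | ∃ F, (F, ε) ∈ Qset P ∧ t = Lg P σ F} := by
  refine ⟨1, ?_⟩
  rintro t ⟨F, ⟨h1, h2, h3, h4⟩, rfl⟩
  exact le_trans (Lg_le_utilS P σ) (utilS_le_one P hpos hsum ⟨h1, h2⟩)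

lemma Lg_continuous (σ : Fin (N + 1) → Fin (N + 1)) :
    Continuous (fun p : ESp N => Lg P σ p.1) := by
  refine continuous_finset_sum _ fun z _ => ?_
  exact continuous_const.mul
    ((continuous_apply z).comp ((continuous_apply (σ z)).comp continuous_fst))

lemma vsl_attained (hpos : ∀ x y, 0 ≤ P x y) (hsum : ∑ x, ∑ y, P x y = 1)
    {ε : ℝ} (hε : ε ∈ Set.Icc (PcX P) (PcXY P)) (σ : Fin (N + 1) → Fin (N + 1)) :
    ∃ F, (F, ε) ∈ Qset P ∧ vsl P σ ε = Lg P σ F := by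
  have hset : {t | ∃ F, (F, ε) ∈ Qset P ∧ t = Lg P σ F}
      = (fun p : ESp N => Lg P σ p.1) '' (Qset P ∩ {p | p.2 = ε}) := by
    ext t
    constructor
    · rintro ⟨F, hF, rfl⟩
      exact ⟨(F, ε), ⟨hF, rfl⟩, rfl⟩
    · rintro ⟨p, ⟨hp, hp2⟩, rfl⟩
      refine ⟨p.1, ?_, rfl⟩
      have : (p.1, ε) = p := by
        rw [← hp2]
      rw [this]
      exact hp
  have hcomp : IsCompact (Qset P ∩ {p : ESp N | p.2 = ε}) :=
    (Qset_compact P).inter_right (isClosed_eq continuous_snd continuous_const)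
  have himg : IsCompact ((fun p : ESp N => Lg P σ p.1) '' (Qset P ∩ {p | p.2 = ε})) :=
    hcomp.image (Lg_continuous P σ)
  have h2 : vsl P σ ε ∈ (fun p : ESp N => Lg P σ p.1) '' (Qset P ∩ {p | p.2 = ε}) := by
    rw [vsl, hset]
    refine himg.sSup_mem ?_
    rw [← hset]
    exact vsl_nonempty P hε σ
  obtain ⟨p, ⟨hp, hp2⟩, heq⟩ := h2
  have hpe : (p.1, ε) = p := by rw [← hp2]
  exact ⟨p.1, by rw [hpe]; exact hp, heq.symm⟩

lemma vsl_mono (hpos : ∀ x y, 0 ≤ P x y) (hsum : ∑ x, ∑ y, P x y = 1)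
    {ε ε' : ℝ} (hε : ε ∈ Set.Icc (PcX P) (PcXY P)) (hε' : ε' ∈ Set.Icc (PcX P) (PcXY P))
    (h : ε ≤ ε') (σ : Fin (N + 1) → Fin (N + 1)) :
    vsl P σ ε ≤ vsl P σ ε' := by
  refine csSup_le_csSup (vsl_bdd P hpos hsum ε' σ) (vsl_nonempty P hε σ) ?_
  rintro t ⟨F, ⟨h1, h2, h3, h4⟩, rfl⟩
  exact ⟨F, ⟨h1, h2, fun τ => le_trans (h3 τ) h, ⟨le_trans h4.1 h, hε'.2⟩⟩, rfl⟩

lemma vsl_tail (hpos : ∀ x y, 0 ≤ P x y) (hsum : ∑ x, ∑ y, P x y = 1)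
    (hlt : PcX P < PcXY P) (σ : Fin (N + 1) → Fin (N + 1)) :
    ∃ ε0 ∈ Set.Ico (PcX P) (PcXY P), ∃ d : ℝ,
      ∀ ε ∈ Set.Icc ε0 (PcXY P), vsl P σ ε = vsl P σ (PcXY P) - (PcXY P - ε) * d := by
  classical
  obtain ⟨V, hVfin, hVhull⟩ := Qset_hull P
  set πσ : ESp N → ℝ × ℝ := fun p => (p.2, Lg P σ p.1) with hπσ
  have hπlin : IsLinearMap ℝ πσ := by
    constructor
    · intro p q
      refine Prod.ext rfl ?_
      show Lg P σ (p.1 + q.1) = Lg P σ p.1 + Lg P σ q.1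
      simp [Lg, Pi.add_apply, mul_add, Finset.sum_add_distrib]
    · intro c p
      refine Prod.ext rfl ?_
      show Lg P σ (c • p.1) = c * Lg P σ p.1
      simp [Lg, Pi.smul_apply, smul_eq_mul, Finset.mul_sum]
      exact Finset.sum_congr rfl fun z _ => by ring
  have hWfin : (πσ '' V).Finite := hVfin.image _
  set W : Finset (ℝ × ℝ) := hWfin.toFinset with hW
  have hWcoe : (W : Set (ℝ × ℝ)) = πσ '' V := hWfin.coe_toFinset
  have himg : πσ '' Qset P = convexHull ℝ (W : Set (ℝ × ℝ)) := by
    rw [hWcoe, hVhull, hπlin.image_convexHull]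
  have hVsub : V ⊆ Qset P := by
    rw [hVhull]; exact subset_convexHull ℝ V
  have hW1 : ∀ w ∈ W, w.1 ∈ Set.Icc (PcX P) (PcXY P) := by
    intro w hw
    rw [← Finset.mem_coe, hWcoe] at hw
    obtain ⟨p, hp, rfl⟩ := hw
    exact (hVsub hp).2.2.2
  have hv_mem : ∀ ε ∈ Set.Icc (PcX P) (PcXY P),
      (ε, vsl P σ ε) ∈ convexHull ℝ (W : Set (ℝ × ℝ)) := by
    intro ε hε
    rw [← himg]
    obtain ⟨F, hF, heq⟩ := vsl_attained P hpos hsum hε σ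
    exact ⟨(F, ε), hF, by rw [hπσ]; simp [heq]⟩
  have hv_max : ∀ p ∈ convexHull ℝ (W : Set (ℝ × ℝ)), p.2 ≤ vsl P σ p.1 := by
    intro p hp
    rw [← himg] at hp
    obtain ⟨q, hq, rfl⟩ := hp
    refine le_csSup (vsl_bdd P hpos hsum q.2 σ) ?_
    exact ⟨q.1, by rw [Prod.mk.eta]; exact hq, rfl⟩
  exact affine_tail W hlt hW1 (vsl P σ) hv_mem hv_max

lemma Qset_to_filter {F : Fin (N + 1) → Fin (N + 1) → ℝ} {ε : ℝ}
    (h : (F, ε) ∈ Qset P) : IsFilterS F ∧ privS P F ≤ ε :=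
  ⟨⟨h.1, h.2.1⟩, (privS_le_iff P F ε).2 h.2.2.1⟩

lemma filter_to_Qset {F : Fin (N + 1) → Fin (N + 1) → ℝ} {ε : ℝ}
    (hF : IsFilterS F) (hp : privS P F ≤ ε) (hε : ε ∈ Set.Icc (PcX P) (PcXY P)) :
    (F, ε) ∈ Qset P :=
  ⟨hF.1, hF.2, fun τ => le_trans (le_trans (le_fin_ciSup (fun τ => ellg P τ F) τ)
    (le_of_eq (privS_eq P F).symm)) hp, hε⟩

/-- the identity filter -/
noncomputable def Fid : Fin (N + 1) → Fin (N + 1) → ℝ := fun y z => if y = z then 1 else 0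

lemma Fid_mem (hle : PcX P ≤ PcXY P) : (Fid (N := N), PcXY P) ∈ Qset P := by
  refine ⟨fun y z => by dsimp [Fid]; positivity, fun y => by simp [Fid], fun τ => ?_,
    ⟨hle, le_refl _⟩⟩
  have h1 : ellg P τ (Fid (N := N)) = ∑ z, P (τ z) z := by
    unfold ellg
    refine Finset.sum_congr rfl fun z _ => ?_
    simp [Fid, mul_ite]
  rw [h1]
  unfold PcXY
  exact Finset.sum_le_sum fun z _ => le_fin_ciSup (fun x => P x z) (τ z)

lemma utilS_Fid (hpos : ∀ x y, 0 ≤ P x y) (hsum : ∑ x, ∑ y, P x y = 1) :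
    utilS P (Fid (N := N)) = 1 := by
  have hz : ∀ z, (⨆ y, (∑ x, P x y) * Fid (N := N) y z) = Qmg P z := by
    intro z
    apply le_antisymm
    · refine ciSup_le fun y => ?_
      by_cases h : y = z
      · subst h; simp [Fid, Qmg]
      · simp only [Fid, if_neg h, mul_zero]
        exact Qmg_nonneg P hpos z
    · have := le_fin_ciSup (fun y => (∑ x, P x y) * Fid (N := N) y z) z
      simpa [Fid, Qmg] using this
  unfold utilS
  rw [Finset.sum_congr rfl fun z _ => hz z]
  exact sum_Qmg P hsum

lemma hset_bdd (hpos : ∀ x y, 0 ≤ P x y) (hsum : ∑ x, ∑ y, P x y = 1) (ε : ℝ) :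
    ∀ u ∈ {u | ∃ F, IsFilterS F ∧ privS P F ≤ ε ∧ u = utilS P F}, u ≤ 1 := by
  rintro u ⟨F, hF, _, rfl⟩
  exact utilS_le_one P hpos hsum hF

lemma hset_nonempty {ε : ℝ} (hε : ε ∈ Set.Icc (PcX P) (PcXY P)) :
    {u | ∃ F, IsFilterS F ∧ privS P F ≤ ε ∧ u = utilS P F}.Nonempty := by
  obtain ⟨h1, h2⟩ := Qset_to_filter P (F0_mem P hε)
  exact ⟨utilS P (F0 (N := N)), F0 (N := N), h1, h2, rfl⟩

lemma hUnder_eq_sup (hpos : ∀ x y, 0 ≤ P x y) (hsum : ∑ x, ∑ y, P x y = 1)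
    {ε : ℝ} (hε : ε ∈ Set.Icc (PcX P) (PcXY P)) :
    hUnder P ε = Finset.univ.sup' Finset.univ_nonempty (fun σ => vsl P σ ε) := by
  apply le_antisymm
  · refine csSup_le (hset_nonempty P hε) ?_
    rintro u ⟨F, hF, hpriv, rfl⟩
    rw [utilS_eq]
    refine ciSup_le fun σ => ?_
    refine le_trans (le_csSup (vsl_bdd P hpos hsum ε σ) ?_)
      (Finset.le_sup' (fun σ => vsl P σ ε) (Finset.mem_univ σ))
    exact ⟨F, filter_to_Qset P hF hpriv hε, rfl⟩
  · obtain ⟨σs, _, hσeq⟩ :=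
      Finset.exists_mem_eq_sup' Finset.univ_nonempty (fun σ => vsl P σ ε)
    rw [hσeq]
    obtain ⟨F, hFQ, hveq⟩ := vsl_attained P hpos hsum hε σs
    rw [hveq]
    obtain ⟨h1, h2⟩ := Qset_to_filter P hFQ
    refine le_trans (Lg_le_utilS P σs) (le_csSup ?_ ⟨F, h1, h2, rfl⟩)
    exact ⟨1, fun u hu => hset_bdd P hpos hsum ε u hu⟩

lemma hUnder_at_top (hpos : ∀ x y, 0 ≤ P x y) (hsum : ∑ x, ∑ y, P x y = 1)
    (hle : PcX P ≤ PcXY P) : hUnder P (PcXY P) = 1 := by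
  apply le_antisymm
  · exact csSup_le (hset_nonempty P ⟨hle, le_refl _⟩) (hset_bdd P hpos hsum _)
  · obtain ⟨h1, h2⟩ := Qset_to_filter P (Fid_mem P hle)
    exact le_csSup ⟨1, fun u hu => hset_bdd P hpos hsum _ u hu⟩
      ⟨Fid (N := N), h1, h2, (utilS_Fid P hpos hsum).symm⟩

end QsetSec

end HUAux

/-- Theorem 3, first part: if `P_c(X) < P_c(X|Y)`, then `h̲` is affine
in the high-utility regime: there are `ε_L ∈ (P_c(X), P_c(X|Y))` and `d ≥ 0` with
`h̲(ε) = 1 − (P_c(X|Y) − ε)·d` on `[ε_L, P_c(X|Y)]`; in particular `d` is the left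
derivative of `h̲` at `P_c(X|Y)`. -/
theorem hUnder_affine_high_utility {M N : ℕ} (P : Fin (M + 1) → Fin (N + 1) → ℝ)
    (hpos : ∀ x y, 0 ≤ P x y) (hsum : ∑ x, ∑ y, P x y = 1)
    (hlt : PcX P < PcXY P) :
    ∃ εL ∈ Set.Ioo (PcX P) (PcXY P), ∃ d : ℝ, 0 ≤ d ∧
      (∀ ε ∈ Set.Icc εL (PcXY P), hUnder P ε = 1 - (PcXY P - ε) * d) ∧
      HasDerivWithinAt (hUnder P) d (Set.Iic (PcXY P)) (PcXY P) := by
  classical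
  open HUAux in
  set a := PcX P with ha
  set b := PcXY P with hb
  have hab : a < b := hlt
  have hne : (Finset.univ : Finset (Fin (N + 1) → Fin (N + 1))).Nonempty :=
    Finset.univ_nonempty
  -- per-σ affine tails
  choose ε0f hIco df hform using fun σ => HUAux.vsl_tail P hpos hsum hlt σ
  have hbIcc : b ∈ Set.Icc a b := ⟨hab.le, le_refl b⟩
  have hdf0 : ∀ σ, 0 ≤ df σ := by
    intro σ
    have h1 := hform σ (ε0f σ) ⟨le_refl _, (hIco σ).2.le⟩
    have h2 : HUAux.vsl P σ (ε0f σ) ≤ HUAux.vsl P σ b :=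
      HUAux.vsl_mono P hpos hsum ⟨(hIco σ).1, (hIco σ).2.le⟩ hbIcc (hIco σ).2.le σ
    have h3 : 0 < b - ε0f σ := by have := (hIco σ).2; linarith
    nlinarith
  set vb : (Fin (N + 1) → Fin (N + 1)) → ℝ := fun σ => HUAux.vsl P σ b with hvb
  have hsupb : Finset.univ.sup' hne vb = 1 := by
    rw [← HUAux.hUnder_eq_sup P hpos hsum hbIcc]
    exact HUAux.hUnder_at_top P hpos hsum hab.le
  have hvble : ∀ σ, vb σ ≤ 1 := fun σ => by
    rw [← hsupb]; exact Finset.le_sup' vb (Finset.mem_univ σ)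
  set G : Finset (Fin (N + 1) → Fin (N + 1)) :=
    Finset.univ.filter (fun σ => vb σ = 1) with hG
  have hGne : G.Nonempty := by
    obtain ⟨σ1, _, h1⟩ := Finset.exists_mem_eq_sup' hne vb
    exact ⟨σ1, Finset.mem_filter.2 ⟨Finset.mem_univ σ1, by rw [← h1, hsupb]⟩⟩
  set dstar : ℝ := G.inf' hGne df with hdstar
  have hdstar0 : 0 ≤ dstar := by
    obtain ⟨σm, _, hm⟩ := Finset.exists_mem_eq_inf' hGne df
    rw [hdstar, hm]; exact hdf0 σm
  set B : Finset (Fin (N + 1) → Fin (N + 1)) :=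
    Finset.univ.filter (fun σ => vb σ ≠ 1) with hB
  set ηv : ℝ := if hBne : B.Nonempty then 1 - B.sup' hBne vb else 1 with hηv
  have hηv0 : 0 < ηv := by
    rw [hηv]
    split_ifs with hBne
    · have : B.sup' hBne vb < 1 := by
        rw [Finset.sup'_lt_iff]
        intro σ hσ
        exact lt_of_le_of_ne (hvble σ) (Finset.mem_filter.1 hσ).2
      linarith
    · norm_num
  set εL : ℝ := max (max ((a + b) / 2) (b - ηv / (dstar + 1)))
    (Finset.univ.sup' hne ε0f) with hεL
  have hεLb : εL < b := by
    rw [hεL]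
    refine max_lt (max_lt (by linarith) ?_) ?_
    · have : 0 < ηv / (dstar + 1) := div_pos hηv0 (by linarith)
      linarith
    · rw [Finset.sup'_lt_iff]
      intro σ _
      exact (hIco σ).2
  have hεLa : a < εL := by
    rw [hεL]
    have : a < (a + b) / 2 := by linarith
    exact lt_of_lt_of_le this (le_trans (le_max_left _ _) (le_max_left _ _))
  have hε0εL : ∀ σ, ε0f σ ≤ εL :=
    fun σ => le_trans (Finset.le_sup' ε0f (Finset.mem_univ σ)) (le_max_right _ _)
  have hεLη : b - εL ≤ ηv / (dstar + 1) := by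
    have : b - ηv / (dstar + 1) ≤ εL :=
      le_trans (le_max_right _ _) (le_max_left _ _)
    linarith
  -- the affine formula
  have hformula : ∀ ε ∈ Set.Icc εL b, hUnder P ε = 1 - (b - ε) * dstar := by
    intro ε hε
    have hεIcc : ε ∈ Set.Icc a b := ⟨le_trans hεLa.le hε.1, hε.2⟩
    rw [HUAux.hUnder_eq_sup P hpos hsum hεIcc]
    apply le_antisymm
    · rw [Finset.sup'_le_iff]
      intro σ _
      by_cases hσ : vb σ = 1
      · have h1 := hform σ ε ⟨le_trans (hε0εL σ) hε.1, hε.2⟩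
        have hσ' : HUAux.vsl P σ (PcXY P) = 1 := hσ
        rw [h1, hσ']
        have hd : dstar ≤ df σ :=
          Finset.inf'_le df (Finset.mem_filter.2 ⟨Finset.mem_univ σ, hσ⟩)
        have hbε : 0 ≤ b - ε := by linarith [hε.2]
        nlinarith
      · have hBne : B.Nonempty := ⟨σ, Finset.mem_filter.2 ⟨Finset.mem_univ σ, hσ⟩⟩
        have hη : ηv = 1 - B.sup' hBne vb := dif_pos hBne
        have h1 : HUAux.vsl P σ ε ≤ vb σ :=
          HUAux.vsl_mono P hpos hsum hεIcc hbIcc hε.2 σ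
        have h2 : vb σ ≤ B.sup' hBne vb :=
          Finset.le_sup' vb (Finset.mem_filter.2 ⟨Finset.mem_univ σ, hσ⟩)
        have h3 : (b - ε) * dstar ≤ ηv := by
          have hbε : 0 ≤ b - ε := by linarith [hε.2]
          have h4 : b - ε ≤ ηv / (dstar + 1) := le_trans (by linarith [hε.1]) hεLη
          have h5 : (b - ε) * dstar ≤ (ηv / (dstar + 1)) * dstar :=
            mul_le_mul_of_nonneg_right h4 hdstar0
          have h6 : (ηv / (dstar + 1)) * dstar ≤ ηv := by
            rw [div_mul_eq_mul_div, div_le_iff₀ (by linarith : (0:ℝ) < dstar + 1)]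
            nlinarith
          linarith
        linarith
    · obtain ⟨σm, hσmG, hm⟩ := Finset.exists_mem_eq_inf' hGne df
      have hσm1 : vb σm = 1 := (Finset.mem_filter.1 hσmG).2
      have h1 := hform σm ε ⟨le_trans (hε0εL σm) hε.1, hε.2⟩
      have h2 : HUAux.vsl P σm ε = 1 - (b - ε) * dstar := by
        have hσm1' : HUAux.vsl P σm (PcXY P) = 1 := hσm1
        rw [h1, hσm1', hdstar, hm]
      rw [← h2]
      exact Finset.le_sup' (fun σ => HUAux.vsl P σ ε) (Finset.mem_univ σm)
  -- derivative
  have hg : HasDerivWithinAt (fun ε : ℝ => 1 - (b - ε) * dstar) dstar (Set.Iic b) b := by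
    have h2 : HasDerivAt (fun ε : ℝ => b - ε) (-1) b := (hasDerivAt_id b).const_sub b
    have h3 := (h2.mul_const dstar).const_sub 1
    have h4 : -(-1 * dstar) = dstar := by ring
    rw [h4] at h3
    exact h3.hasDerivWithinAt
  have hderiv : HasDerivWithinAt (hUnder P) dstar (Set.Iic b) b := by
    refine hg.congr_of_eventuallyEq ?_ ?_
    · have hmem : Set.Ioi εL ∩ Set.Iic b ∈ nhdsWithin b (Set.Iic b) :=
        Filter.inter_mem (mem_nhdsWithin_of_mem_nhds (Ioi_mem_nhds hεLb))
          self_mem_nhdsWithin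
      refine Filter.eventuallyEq_of_mem hmem ?_
      intro x hx
      exact hformula x ⟨hx.1.le, hx.2⟩
    · have := hformula b ⟨hεLb.le, le_refl b⟩
      rw [this]
  exact ⟨εL, ⟨hεLa, hεLb⟩, dstar, hdstar0, hformula, hderiv⟩
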